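/- Let P be a finite poset with P = Q ∪ R, where Q and R are closed subposets of P such that Q ∩ R is of codimension one both in Q and in R, and each of Q, R and Q ∩ R is constructible. Then Q ∩ R is of pure codimension one both in Q and in R. -/

import Mathlib

/-- `a` is a maximal element of the subposet `A`. -/
def IsMaxIn {P : Type*} [PartialOrder P] (A : Set P) (a : P) : Prop :=
  a ∈ A ∧ ∀ x ∈ A, a ≤ x → x = a

/-- `b` covers `a` within the subposet `A`: `a < b` and no element of `A` lies
strictly between them. -/
def CoversIn {P : Type*} [PartialOrder P] (A : Set P) (a b : P) : Prop :=
  a ∈ A ∧ b ∈ A ∧ a < b ∧ ∀ x ∈ A, a < x → ¬x < b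

/-- The subposet `A` is of codimension one in the subposet `B`: every maximal element
of `A` is covered (within `B`) by a maximal element of `B`. -/
def CodimOneIn {P : Type*} [PartialOrder P] (A B : Set P) : Prop :=
  ∀ a : P, IsMaxIn A a → ∃ b : P, IsMaxIn B b ∧ CoversIn B a b

/-- The subposet `A` is of pure codimension one in the subposet `B`: it is of
codimension one, and no maximal element of `A` is covered by a non-maximal element
of `B`. -/
def PureCodimOneIn {P : Type*} [PartialOrder P] (A B : Set P) : Prop :=
  CodimOneIn A B ∧ ∀ a : P, IsMaxIn A a → ∀ b : P, CoversIn B a b → IsMaxIn B b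

/-- `A` is a closed subposet of the subposet `B`. -/
def IsClosedSubposet {P : Type*} [PartialOrder P] (B A : Set P) : Prop :=
  A ⊆ B ∧ ∀ a ∈ A, ∀ x ∈ B, x ≤ a → x ∈ A

/-- A (sub)poset is constructible if either it has a greatest element, or it is a union
`Q ∪ R` of closed subposets such that `Q ∩ R` is of codimension one both in `Q` and in
`R`, and each of `Q`, `R` and `Q ∩ R` is constructible. -/
inductive PosetConstructible {P : Type*} [PartialOrder P] : Set P → Prop where
  | cone {A : Set P} {g : P} (hg : g ∈ A) (hgreatest : ∀ x ∈ A, x ≤ g) :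
      PosetConstructible A
  | step {Q R : Set P} (hQ : IsClosedSubposet (Q ∪ R) Q) (hR : IsClosedSubposet (Q ∪ R) R)
      (hcQ : CodimOneIn (Q ∩ R) Q) (hcR : CodimOneIn (Q ∩ R) R)
      (cQ : PosetConstructible Q) (cR : PosetConstructible R)
      (cQR : PosetConstructible (Q ∩ R)) : PosetConstructible (Q ∪ R)

/-- A monotone map `f : P → Q` is a filtration map if `f⁻¹(⌊q⌋ \ {q})` is of
codimension one in `f⁻¹(⌊q⌋)` for every `q`. -/
def IsFiltrationMap {P Q : Type*} [PartialOrder P] [PartialOrder Q] (f : P → Q) : Prop :=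
  ∀ q : Q, CodimOneIn (f ⁻¹' {y | y < q}) (f ⁻¹' {y | y ≤ q})

/-- A monotone map `f : P → Q` is a pure filtration map if `f⁻¹(⌊q⌋ \ {q})` is of
pure codimension one in `f⁻¹(⌊q⌋)` for every `q`. -/
def IsPureFiltrationMap {P Q : Type*} [PartialOrder P] [PartialOrder Q] (f : P → Q) :
    Prop :=
  ∀ q : Q, PureCodimOneIn (f ⁻¹' {y | y < q}) (f ⁻¹' {y | y ≤ q})

/-- A monotone map is constructible if it is a filtration map and every `f⁻¹(⌊q⌋)` is
constructible. -/
def IsConstructibleMap {P Q : Type*} [PartialOrder P] [PartialOrder Q] (f : P → Q) :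
    Prop :=
  IsFiltrationMap f ∧ ∀ q : Q, PosetConstructible (f ⁻¹' {y | y ≤ q})

section Aux

variable {P : Type*} [PartialOrder P]

private lemma coversIn_mono {S A : Set P} (hSA : S ⊆ A) {a b : P} (ha : a ∈ S) (hb : b ∈ S)
    (h : CoversIn A a b) : CoversIn S a b :=
  ⟨ha, hb, h.2.2.1, fun x hx => h.2.2.2 x (hSA hx)⟩

private lemma isMaxIn_mono {S A : Set P} (hSA : S ⊆ A) {b : P} (hb : b ∈ S)
    (h : IsMaxIn A b) : IsMaxIn S b :=
  ⟨hb, fun x hx => h.2 x (hSA hx)⟩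

/-- The "same side" case: `b` and `m` both lie in `Q`. -/
private lemma sideCase {A Q R : Set P} (hA : A = Q ∪ R)
    (hQc : IsClosedSubposet A Q) (hRc : IsClosedSubposet A R)
    (hcQ : CodimOneIn (Q ∩ R) Q)
    (ihQ : ∀ a m b : P, IsMaxIn Q m → CoversIn Q a m → CoversIn Q a b → IsMaxIn Q b)
    {a m b : P} (hm : IsMaxIn A m) (ham : CoversIn A a m) (hab : CoversIn A a b)
    (hbQ : b ∈ Q) (hmQ : m ∈ Q) : IsMaxIn A b := by
  have haQ : a ∈ Q := hQc.2 b hbQ a ham.1 hab.2.2.1.le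
  have bmaxQ : IsMaxIn Q b :=
    ihQ a m b (isMaxIn_mono hQc.1 hmQ hm) (coversIn_mono hQc.1 haQ hmQ ham)
      (coversIn_mono hQc.1 haQ hbQ hab)
  refine ⟨hQc.1 hbQ, fun x hx hbx => ?_⟩
  by_contra hne
  have hlt : b < x := lt_of_le_of_ne hbx (Ne.symm hne)
  have hxA : x ∈ Q ∪ R := hA ▸ hx
  rcases hxA with hxQ | hxR
  · exact hne (bmaxQ.2 x hxQ hbx)
  · have hbR : b ∈ R := hRc.2 x hxR b (hQc.1 hbQ) hbx
    have bmaxD : IsMaxIn (Q ∩ R) b := isMaxIn_mono Set.inter_subset_left ⟨hbQ, hbR⟩ bmaxQ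
    obtain ⟨c, _, ccov⟩ := hcQ b bmaxD
    exact absurd (bmaxQ.2 c ccov.2.1 ccov.2.2.1.le) (ne_of_gt ccov.2.2.1)

/-- The "mixed" case: `b ∈ Q \ R` and `m ∈ R \ Q`. -/
private lemma mixedCase [Finite P] {A Q R : Set P} (hA : A = Q ∪ R)
    (hQc : IsClosedSubposet A Q) (hRc : IsClosedSubposet A R)
    (hcQ : CodimOneIn (Q ∩ R) Q) (hcR : CodimOneIn (Q ∩ R) R)
    (ihQ : ∀ a m b : P, IsMaxIn Q m → CoversIn Q a m → CoversIn Q a b → IsMaxIn Q b)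
    (ihR : ∀ a m b : P, IsMaxIn R m → CoversIn R a m → CoversIn R a b → IsMaxIn R b)
    {a m b : P} (hm : IsMaxIn A m) (ham : CoversIn A a m) (hab : CoversIn A a b)
    (hbQ : b ∈ Q) (hbR : b ∉ R) (hmR : m ∈ R) (_hmQ : m ∉ Q) : IsMaxIn A b := by
  have haQ : a ∈ Q := hQc.2 b hbQ a ham.1 hab.2.2.1.le
  have haR : a ∈ R := hRc.2 m hmR a ham.1 ham.2.2.1.le
  have mmaxR : IsMaxIn R m := isMaxIn_mono hRc.1 hmR hm
  have covRm : CoversIn R a m := coversIn_mono hRc.1 haR hmR ham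
  -- `a` is maximal in `Q ∩ R`
  have amaxD : IsMaxIn (Q ∩ R) a := by
    refine ⟨⟨haQ, haR⟩, fun z hz haz => ?_⟩
    by_contra hne
    have hlt : a < z := lt_of_le_of_ne haz (Ne.symm hne)
    -- choose a minimal element of Q ∩ R strictly above a
    obtain ⟨z0, hz0, hz0min⟩ : ∃ z0 ∈ {w | w ∈ Q ∩ R ∧ a < w},
        ∀ w ∈ {w | w ∈ Q ∩ R ∧ a < w}, id w ≤ id z0 → id z0 = id w := by
      obtain ⟨z0, hz0⟩ := (Set.toFinite {w | w ∈ Q ∩ R ∧ a < w}).exists_minimal ⟨z, hz, hlt⟩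
      exact ⟨z0, hz0.prop, fun w hw hle => le_antisymm (hz0.le_of_le hw hle) hle⟩
    have covRz0 : CoversIn R a z0 := by
      refine ⟨haR, hz0.1.2, hz0.2, fun w hwR hw hwz0 => ?_⟩
      have hwQ : w ∈ Q := hQc.2 z0 hz0.1.1 w (hRc.1 hwR) hwz0.le
      exact absurd (hz0min w ⟨⟨hwQ, hwR⟩, hw⟩ hwz0.le) (ne_of_gt hwz0)
    have z0maxR : IsMaxIn R z0 := ihR a m z0 mmaxR covRm covRz0
    have z0maxD : IsMaxIn (Q ∩ R) z0 := isMaxIn_mono Set.inter_subset_right hz0.1 z0maxR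
    obtain ⟨c, _, ccov⟩ := hcR z0 z0maxD
    exact absurd (z0maxR.2 c ccov.2.1 ccov.2.2.1.le) (ne_of_gt ccov.2.2.1)
  obtain ⟨m', m'max, m'cov⟩ := hcQ a amaxD
  have bmaxQ : IsMaxIn Q b := ihQ a m' b m'max m'cov (coversIn_mono hQc.1 haQ hbQ hab)
  refine ⟨hQc.1 hbQ, fun x hx hbx => ?_⟩
  have hxA : x ∈ Q ∪ R := hA ▸ hx
  rcases hxA with hxQ | hxR
  · exact bmaxQ.2 x hxQ hbx
  · by_contra hne
    have hlt : b < x := lt_of_le_of_ne hbx (Ne.symm hne)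
    exact hbR (hRc.2 x hxR b (hQc.1 hbQ) hbx)

/-- Key lemma: in a constructible poset, if `a` is covered by some maximal element,
then every element covering `a` is maximal. -/
private lemma key [Finite P] {A : Set P} (hA : PosetConstructible A) :
    ∀ a m b : P, IsMaxIn A m → CoversIn A a m → CoversIn A a b → IsMaxIn A b := by
  induction hA with
  | @cone A g hg hgreatest =>
    intro a m b hm ham hab
    have hgm : g = m := hm.2 g hg (hgreatest m hm.1)
    by_cases hbm : b = m
    · exact hbm ▸ hm
    · exact absurd (lt_of_le_of_ne (hgm ▸ hgreatest b hab.2.1) hbm)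
        (ham.2.2.2 b hab.2.1 hab.2.2.1)
  | @step Q R hQc hRc hcQ hcR cQ cR cQR ihQ ihR ihD =>
    intro a m b hm ham hab
    rcases hab.2.1 with hbQ | hbR
    · rcases hm.1 with hmQ | hmR
      · exact sideCase rfl hQc hRc hcQ ihQ hm ham hab hbQ hmQ
      · by_cases hbR : b ∈ R
        · exact sideCase (Set.union_comm Q R)
            hRc hQc (Set.inter_comm Q R ▸ hcR) ihR hm ham hab hbR hmR
        · by_cases hmQ : m ∈ Q
          · exact sideCase rfl hQc hRc hcQ ihQ hm ham hab hbQ hmQ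
          · exact mixedCase rfl hQc hRc hcQ hcR ihQ ihR hm ham hab hbQ hbR hmR hmQ
    · rcases hm.1 with hmQ | hmR
      · by_cases hbQ : b ∈ Q
        · exact sideCase rfl hQc hRc hcQ ihQ hm ham hab hbQ hmQ
        · by_cases hmR : m ∈ R
          · exact sideCase (Set.union_comm Q R)
              hRc hQc (Set.inter_comm Q R ▸ hcR) ihR hm ham hab hbR hmR
          · exact mixedCase (Set.union_comm Q R)
              hRc hQc (Set.inter_comm Q R ▸ hcR) (Set.inter_comm Q R ▸ hcQ)
              ihR ihQ hm ham hab hbR hbQ hmQ hmR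
      · exact sideCase (Set.union_comm Q R)
          hRc hQc (Set.inter_comm Q R ▸ hcR) ihR hm ham hab hbR hmR

end Aux

/-- If `P = Q ∪ R` is a construction step (with `Q`, `R`, `Q ∩ R` constructible and
`Q ∩ R` of codimension one in `Q` and in `R`), then `Q ∩ R` is of pure codimension one
both in `Q` and in `R`. -/
theorem construction_step_pure {P : Type*} [PartialOrder P] [Finite P] (Q R : Set P)
    (hunion : Q ∪ R = Set.univ)
    (hQ : IsClosedSubposet Set.univ Q) (hR : IsClosedSubposet Set.univ R)
    (hcQ : CodimOneIn (Q ∩ R) Q) (hcR : CodimOneIn (Q ∩ R) R)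
    (cQ : PosetConstructible Q) (cR : PosetConstructible R)
    (cQR : PosetConstructible (Q ∩ R)) :
    PureCodimOneIn (Q ∩ R) Q ∧ PureCodimOneIn (Q ∩ R) R := by
  refine ⟨⟨hcQ, fun a ha b hcov => ?_⟩, ⟨hcR, fun a ha b hcov => ?_⟩⟩
  · obtain ⟨m, hmmax, hmcov⟩ := hcQ a ha
    exact key cQ a m b hmmax hmcov hcov
  · obtain ⟨m, hmmax, hmcov⟩ := hcR a ha
    exact key cR a m b hmmax hmcov hcov
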